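/- Let k > 0, m ≥ 1, n ≥ 3, N = −k ± √(m + (n−1)k²) (either sign, N ≠ 0), c₁, c₂ > 0, b ∈ ℝ. Define on an interval where Nξ + b > 0: φ(ξ) = c₂(Nξ + b)^(−k/N), f(ξ) = c₁(Nξ + b)^(−1/N), h(ξ) = −((m − (n−2)k + N)/N)·ln(Nξ + b). Then these functions satisfy the ODE system: (n−2)φ''/φ + h'' − m f''/f − 2m(φ'/φ)(f'/f) + 2(φ'/φ)h' = 0; φ''/φ − (n−1)(φ'/φ)² + m(φ'/φ)(f'/f) − (φ'/φ)h' = 0; −f''/f + (n−2)(φ'/φ)(f'/f) − (m−1)(f'/f)² + (f'/f)h' = 0. -/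

import Mathlib

lemma hdpow (c p N b ξ : ℝ) (hx : 0 < N * ξ + b) :
    HasDerivAt (fun ξ => c * (N * ξ + b) ^ p) (c * p * N * (N * ξ + b) ^ (p - 1)) ξ := by
  have h1 : HasDerivAt (fun ξ : ℝ => N * ξ + b) N ξ := by
    simpa using ((hasDerivAt_id ξ).const_mul N).add_const b
  have h2 := (Real.hasDerivAt_rpow_const (p := p) (Or.inl hx.ne')).comp ξ h1
  have h3 := h2.const_mul c
  refine h3.congr_deriv ?_
  ring

lemma derivpow (c p N b ξ : ℝ) (hx : 0 < N * ξ + b) :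
    deriv (fun ξ => c * (N * ξ + b) ^ p) ξ = c * p * N * (N * ξ + b) ^ (p - 1) :=
  (hdpow c p N b ξ hx).deriv

lemma deriv2pow (c p N b ξ : ℝ) (hx : 0 < N * ξ + b) :
    deriv (deriv (fun ξ => c * (N * ξ + b) ^ p)) ξ
      = c * p * (p - 1) * N ^ 2 * (N * ξ + b) ^ (p - 2) := by
  have hopen : IsOpen {ξ : ℝ | 0 < N * ξ + b} :=
    isOpen_lt continuous_const (by continuity)
  have hev : deriv (fun ξ => c * (N * ξ + b) ^ p)
      =ᶠ[nhds ξ] fun ξ => (c * p * N) * (N * ξ + b) ^ (p - 1) := by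
    filter_upwards [hopen.mem_nhds hx] with y hy
    exact derivpow c p N b y hy
  rw [hev.deriv_eq, derivpow (c * p * N) (p - 1) N b ξ hx,
    show p - 1 - 1 = p - 2 by ring]
  ring

lemma hdlog (C N b ξ : ℝ) (hx : 0 < N * ξ + b) :
    HasDerivAt (fun ξ => C * Real.log (N * ξ + b)) (C * N * (N * ξ + b)⁻¹) ξ := by
  have h1 : HasDerivAt (fun ξ : ℝ => N * ξ + b) N ξ := by
    simpa using ((hasDerivAt_id ξ).const_mul N).add_const b
  have h2 := ((Real.hasDerivAt_log hx.ne').comp ξ h1).const_mul C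
  refine h2.congr_deriv ?_
  ring

lemma deriv2log (C N b ξ : ℝ) (hx : 0 < N * ξ + b) :
    deriv (deriv (fun ξ => C * Real.log (N * ξ + b))) ξ
      = -(C * N ^ 2) * (N * ξ + b) ^ (-2 : ℝ) := by
  have hopen : IsOpen {ξ : ℝ | 0 < N * ξ + b} :=
    isOpen_lt continuous_const (by continuity)
  have hev : deriv (fun ξ => C * Real.log (N * ξ + b))
      =ᶠ[nhds ξ] fun ξ => (C * N) * (N * ξ + b) ^ (-1 : ℝ) := by
    filter_upwards [hopen.mem_nhds hx] with y hy
    rw [(hdlog C N b y hy).deriv, Real.rpow_neg_one]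
  rw [hev.deriv_eq, derivpow (C * N) (-1) N b ξ hx,
    show (-1 : ℝ) - 1 = -2 by ring]
  ring

theorem stmt_3 (k m n N c₁ c₂ b : ℝ) (hk : 0 < k) (hm : 1 ≤ m) (hn : 3 ≤ n)
    (hN : N = -k + Real.sqrt (m + (n - 1) * k ^ 2) ∨
          N = -k - Real.sqrt (m + (n - 1) * k ^ 2))
    (hN0 : N ≠ 0) (hc₁ : 0 < c₁) (hc₂ : 0 < c₂)
    (φ f h : ℝ → ℝ)
    (hφ : φ = fun ξ => c₂ * (N * ξ + b) ^ (-(k / N)))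
    (hf : f = fun ξ => c₁ * (N * ξ + b) ^ (-(1 / N)))
    (hh : h = fun ξ => -((m - (n - 2) * k + N) / N) * Real.log (N * ξ + b)) :
    ∀ ξ : ℝ, N * ξ + b > 0 →
      ((n - 2) * deriv (deriv φ) ξ / φ ξ + deriv (deriv h) ξ
          - m * deriv (deriv f) ξ / f ξ
          - 2 * m * (deriv φ ξ / φ ξ) * (deriv f ξ / f ξ)
          + 2 * (deriv φ ξ / φ ξ) * deriv h ξ = 0) ∧
      (deriv (deriv φ) ξ / φ ξ - (n - 1) * (deriv φ ξ / φ ξ) ^ 2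
          + m * (deriv φ ξ / φ ξ) * (deriv f ξ / f ξ)
          - (deriv φ ξ / φ ξ) * deriv h ξ = 0) ∧
      (-(deriv (deriv f) ξ / f ξ) + (n - 2) * (deriv φ ξ / φ ξ) * (deriv f ξ / f ξ)
          - (m - 1) * (deriv f ξ / f ξ) ^ 2 + (deriv f ξ / f ξ) * deriv h ξ = 0) := by
  -- key algebraic identity
  have hs : (0 : ℝ) ≤ m + (n - 1) * k ^ 2 := by nlinarith
  have key : N ^ 2 + 2 * k * N = m + (n - 2) * k ^ 2 := by
    have hsq := Real.sq_sqrt hs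
    rcases hN with h' | h' <;> subst h' <;> nlinarith [hsq]
  intro ξ hx
  set x : ℝ := N * ξ + b with hxdef
  have hx' : 0 < N * ξ + b := hx
  clear_value x
  have hx0 : x ≠ 0 := ne_of_gt hx
  -- values and derivatives
  have hφv : φ ξ = c₂ * x ^ (-(k / N)) := by simp only [hφ, hxdef]
  have hfv : f ξ = c₁ * x ^ (-(1 / N)) := by simp only [hf, hxdef]
  have hφ1 : deriv φ ξ = c₂ * (-(k / N)) * N * x ^ (-(k / N) - 1) := by
    rw [hφ, hxdef]; exact derivpow _ _ _ _ _ hx'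
  have hφ2 : deriv (deriv φ) ξ
      = c₂ * (-(k / N)) * (-(k / N) - 1) * N ^ 2 * x ^ (-(k / N) - 2) := by
    rw [hφ, hxdef]; exact deriv2pow _ _ _ _ _ hx'
  have hf1 : deriv f ξ = c₁ * (-(1 / N)) * N * x ^ (-(1 / N) - 1) := by
    rw [hf, hxdef]; exact derivpow _ _ _ _ _ hx'
  have hf2 : deriv (deriv f) ξ
      = c₁ * (-(1 / N)) * (-(1 / N) - 1) * N ^ 2 * x ^ (-(1 / N) - 2) := by
    rw [hf, hxdef]; exact deriv2pow _ _ _ _ _ hx'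
  have hh1 : deriv h ξ = -((m - (n - 2) * k + N) / N) * N * x⁻¹ := by
    rw [hh, hxdef]; exact (hdlog _ _ _ _ hx').deriv
  have hh2 : deriv (deriv h) ξ
      = -(-((m - (n - 2) * k + N) / N) * N ^ 2) * x ^ (-2 : ℝ) := by
    rw [hh, hxdef]; exact deriv2log _ _ _ _ hx'
  -- rpow simplifications
  have hxpφ : (0 : ℝ) < x ^ (-(k / N)) := Real.rpow_pos_of_pos hx _
  have hxpf : (0 : ℝ) < x ^ (-(1 / N)) := Real.rpow_pos_of_pos hx _
  have e1 : x ^ (-(k / N) - 1) = x ^ (-(k / N)) / x := by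
    rw [Real.rpow_sub hx, Real.rpow_one]
  have e2 : x ^ (-(k / N) - 2) = x ^ (-(k / N)) / x ^ 2 := by
    rw [Real.rpow_sub hx, show (2 : ℝ) = ((2 : ℕ) : ℝ) by norm_num, Real.rpow_natCast]
  have e3 : x ^ (-(1 / N) - 1) = x ^ (-(1 / N)) / x := by
    rw [Real.rpow_sub hx, Real.rpow_one]
  have e4 : x ^ (-(1 / N) - 2) = x ^ (-(1 / N)) / x ^ 2 := by
    rw [Real.rpow_sub hx, show (2 : ℝ) = ((2 : ℕ) : ℝ) by norm_num, Real.rpow_natCast]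
  have e5 : x ^ (-2 : ℝ) = 1 / x ^ 2 := by
    rw [show (-2 : ℝ) = -((2 : ℕ) : ℝ) by norm_num, Real.rpow_neg hx.le,
      Real.rpow_natCast, one_div]
  -- closed-form ratios
  have Rφ1 : deriv φ ξ / φ ξ = -k / x := by
    rw [hφ1, hφv, e1]; field_simp
  have Rφ2 : deriv (deriv φ) ξ / φ ξ = (k ^ 2 + k * N) / x ^ 2 := by
    rw [hφ2, hφv, e2]; field_simp; ring
  have Rf1 : deriv f ξ / f ξ = -1 / x := by
    rw [hf1, hfv, e3]; field_simp
  have Rf2 : deriv (deriv f) ξ / f ξ = (1 + N) / x ^ 2 := by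
    rw [hf2, hfv, e4]; field_simp; ring
  have Rh1 : deriv h ξ = -(m - (n - 2) * k + N) / x := by
    rw [hh1]; field_simp
  have Rh2 : deriv (deriv h) ξ = (m - (n - 2) * k + N) * N / x ^ 2 := by
    rw [hh2, e5]; field_simp
  refine ⟨?_, ?_, ?_⟩
  · simp only [mul_div_assoc]
    rw [Rφ2, Rh2, Rf2, Rφ1, Rf1, Rh1]
    field_simp
    linear_combination key
  · rw [Rφ2, Rφ1, Rf1, Rh1]
    field_simp
    ring
  · rw [Rf2, Rφ1, Rf1, Rh1]
    field_simp
    ring
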